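/- arXiv:2201.02292 — 2 statements merged into one kernel-verified Lean document; each statement's English description precedes it below -/
import Mathlib

section
/- For each (x,w) ∈ 𝒳×𝒲, the density of the intervened covariate vector satisfies lim_{δ→0} (f_{X_δ,W}(x,w) − f_{X,W}(x,w))/δ = −∂/∂x[κ(x)·f_{X,W}(x,w)], where f_{X_δ,W}(x,w) := J(x^δ;δ)·f_{X,W}(x^δ,w) is the joint density of (𝒢(X;δ),W). (Theorem 1(i).) -/
open MeasureTheory Filter Set Topology

set_option maxHeartbeats 2000000 in
/-- **Theorem 1(i)**: pointwise limit of the difference quotient of the intervened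
joint density `f_{X_δ,W}(x,w) = J(x^δ;δ)·f_{X,W}(x^δ,w)`:
`lim_{δ→0} (f_{X_δ,W}(x,w) − f_{X,W}(x,w))/δ = −∂/∂x [κ(x)·f_{X,W}(x,w)]`. -/
theorem stmt_0
    {dw : ℕ}
    (ε : ℝ) (hε : 0 < ε)
    -- 𝒳 is an open interval of ℝ
    (Xs : Set ℝ) (hXs_open : IsOpen Xs) (hXs_conn : Xs.OrdConnected)
    -- 𝒲 ⊆ ℝ^{d_w}
    (Ws : Set (Fin dw → ℝ))
    (G Ginv J : ℝ → ℝ → ℝ) (κ : ℝ → ℝ)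
    (f : ℝ → (Fin dw → ℝ) → ℝ)
    -- 𝒢 is twice continuously differentiable on 𝒳 × 𝒩_ε
    (hG_smooth : ContDiffOn ℝ 2 (fun p : ℝ × ℝ => G p.1 p.2) (Xs ×ˢ Ioo (-ε) ε))
    -- 𝒢(·;δ) is strictly increasing on 𝒳 for each δ ∈ 𝒩_ε
    (hG_mono : ∀ δ ∈ Ioo (-ε) ε, StrictMonoOn (fun x => G x δ) Xs)
    -- 𝒢(x;0) = x
    (hG_id : ∀ x ∈ Xs, G x 0 = x)
    -- x ↦ x^δ = Ginv x δ is the inverse of x ↦ 𝒢(x;δ)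
    (hGinv_mem : ∀ δ ∈ Ioo (-ε) ε, ∀ x ∈ Xs, Ginv x δ ∈ Xs)
    (hGinv : ∀ δ ∈ Ioo (-ε) ε, ∀ x ∈ Xs, G (Ginv x δ) δ = x)
    -- J(x^δ;δ) = ∂x^δ/∂x is the Jacobian of the inverse transform
    (hJ : ∀ δ ∈ Ioo (-ε) ε, ∀ x ∈ Xs, HasDerivAt (fun y => Ginv y δ) (J x δ) x)
    -- κ(x) = ∂𝒢(x;δ)/∂δ |_{δ=0}
    (hκ : ∀ x ∈ Xs, HasDerivAt (fun δ => G x δ) (κ x) 0)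
    -- f_{X,W} is a joint probability density, continuously differentiable in x
    (hf_nonneg : ∀ x w, 0 ≤ f x w)
    (hf_total : (∫ w in Ws, ∫ x in Xs, f x w) = 1)
    (hf_smooth : ∀ w ∈ Ws, ContDiffOn ℝ 1 (fun x => f x w) Xs) :
    ∀ x ∈ Xs, ∀ w ∈ Ws,
      ∃ d : ℝ,
        HasDerivAt (fun y => κ y * f y w) d x ∧
        Tendsto (fun δ => (J x δ * f (Ginv x δ) w - f x w) / δ)
          (𝓝[≠] (0:ℝ)) (𝓝 (-d)) := by
  intro x hx w hw
  have h0ε : (0:ℝ) ∈ Ioo (-ε) ε := ⟨by linarith, hε⟩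
  set S : Set (ℝ × ℝ) := Xs ×ˢ Ioo (-ε) ε with hS
  have hS_open : IsOpen S := hXs_open.prod isOpen_Ioo
  set G2 : ℝ × ℝ → ℝ := fun p => G p.1 p.2 with hG2def
  have hxS : ((x, 0) : ℝ × ℝ) ∈ S := ⟨hx, h0ε⟩
  set DG : ℝ × ℝ → (ℝ × ℝ →L[ℝ] ℝ) := fun p => fderiv ℝ G2 p with hDGdef
  -- differentiability of G2 on S
  have hG2_diff : ∀ p ∈ S, HasFDerivAt G2 (DG p) p := by
    intro p hp
    exact ((hG_smooth.differentiableOn (by norm_num)).differentiableAt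
      (hS_open.mem_nhds hp)).hasFDerivAt
  -- DG is C¹ on S
  have hDG_cd : ContDiffOn ℝ 1 DG S := by
    have h2 : ContDiffOn ℝ (1 + 1 : ℕ) G2 S := by exact_mod_cast hG_smooth
    exact ((contDiffOn_succ_iff_fderiv_of_isOpen hS_open).1 h2).2.2
  have hDG_diffAt : DifferentiableAt ℝ DG (x, 0) :=
    (hDG_cd.differentiableOn one_ne_zero).differentiableAt (hS_open.mem_nhds hxS)
  set B : ℝ × ℝ →L[ℝ] (ℝ × ℝ →L[ℝ] ℝ) := fderiv ℝ DG (x, 0) with hBdef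
  -- partial derivatives
  have hline1 : ∀ (c y : ℝ), HasDerivAt (fun z : ℝ => ((z, c) : ℝ × ℝ)) ((1, 0) : ℝ × ℝ) y :=
    fun c y => (hasDerivAt_id y).prodMk (hasDerivAt_const y c)
  have hline2 : ∀ (c y : ℝ), HasDerivAt (fun z : ℝ => ((c, z) : ℝ × ℝ)) ((0, 1) : ℝ × ℝ) y :=
    fun c y => (hasDerivAt_const y c).prodMk (hasDerivAt_id y)
  have hpartx : ∀ p ∈ S, HasDerivAt (fun z => G z p.2) (DG p (1, 0)) p.1 := by
    intro p hp
    have := (hG2_diff p hp).comp_hasDerivAt p.1 (hline1 p.2 p.1)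
    exact this
  have hpartd : ∀ p ∈ S, HasDerivAt (fun z => G p.1 z) (DG p (0, 1)) p.2 := by
    intro p hp
    have := (hG2_diff p hp).comp_hasDerivAt p.2 (hline2 p.1 p.2)
    exact this
  -- Fact A1 : DG (y,0) (1,0) = 1 on Xs
  have hA1 : ∀ y ∈ Xs, DG (y, 0) ((1, 0) : ℝ × ℝ) = 1 := by
    intro y hy
    have h1 : HasDerivAt (fun z => G z 0) (DG (y, 0) (1, 0)) y := hpartx (y, 0) ⟨hy, h0ε⟩
    have h2 : HasDerivAt (fun z : ℝ => z) (DG (y, 0) (1, 0)) y := by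
      refine h1.congr_of_eventuallyEq ?_
      filter_upwards [hXs_open.mem_nhds hy] with z hz
      exact (hG_id z hz).symm
    exact h2.unique (hasDerivAt_id y)
  -- Fact A2 : DG (y,0) (0,1) = κ y on Xs
  have hA2 : ∀ y ∈ Xs, DG (y, 0) ((0, 1) : ℝ × ℝ) = κ y := by
    intro y hy
    exact (hpartd (y, 0) ⟨hy, h0ε⟩).unique (hκ y hy)
  -- Fact A3 : Ginv y 0 = y on Xs
  have hA3 : ∀ y ∈ Xs, Ginv y 0 = y := by
    intro y hy
    have h1 := hGinv 0 h0ε y hy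
    rwa [hG_id _ (hGinv_mem 0 h0ε y hy)] at h1
  -- Fact A5 : Jacobian formula
  have hA5 : ∀ δ ∈ Ioo (-ε) ε, J x δ = (DG (Ginv x δ, δ) ((1, 0) : ℝ × ℝ))⁻¹ := by
    intro δ hδ
    have hmem : ((Ginv x δ, δ) : ℝ × ℝ) ∈ S := ⟨hGinv_mem δ hδ x hx, hδ⟩
    have h1 : HasDerivAt (fun y => G (Ginv y δ) δ)
        (DG (Ginv x δ, δ) (1, 0) * J x δ) x :=
      by have := (hpartx _ hmem).comp x (hJ δ hδ x hx); exact this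
    have h2 : HasDerivAt (fun y : ℝ => y) (DG (Ginv x δ, δ) (1, 0) * J x δ) x := by
      refine h1.congr_of_eventuallyEq ?_
      filter_upwards [hXs_open.mem_nhds hx] with z hz
      exact (hGinv δ hδ z hz).symm
    have h3 : DG (Ginv x δ, δ) (1, 0) * J x δ = 1 := h2.unique (hasDerivAt_id x)
    exact eq_inv_of_mul_eq_one_left (by rw [mul_comm]; exact h3)
  -- the continuous linear equivalence (u,v) ↦ (u + κ x * v, v)
  set κx : ℝ := κ x with hκxdef
  set A : ℝ × ℝ →L[ℝ] ℝ × ℝ :=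
    (ContinuousLinearMap.fst ℝ ℝ ℝ + κx • ContinuousLinearMap.snd ℝ ℝ ℝ).prod
      (ContinuousLinearMap.snd ℝ ℝ ℝ) with hAdef
  set A' : ℝ × ℝ →L[ℝ] ℝ × ℝ :=
    (ContinuousLinearMap.fst ℝ ℝ ℝ - κx • ContinuousLinearMap.snd ℝ ℝ ℝ).prod
      (ContinuousLinearMap.snd ℝ ℝ ℝ) with hA'def
  have hAA' : Function.LeftInverse A' A := by
    intro p; simp [hAdef, hA'def]
  have hA'A : Function.RightInverse A' A := by
    intro p; simp [hAdef, hA'def]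
  set e : (ℝ × ℝ) ≃L[ℝ] (ℝ × ℝ) := ContinuousLinearEquiv.equivOfInverse A A' hAA' hA'A
    with hedef
  -- F = (G2, snd)
  set F : ℝ × ℝ → ℝ × ℝ := fun p => (G2 p, p.2) with hFdef
  have hF_fderiv : HasFDerivAt F ((DG (x, 0)).prod (ContinuousLinearMap.snd ℝ ℝ ℝ)) (x, 0) :=
    (hG2_diff (x, 0) hxS).prodMk ((ContinuousLinearMap.snd ℝ ℝ ℝ).hasFDerivAt)
  have hDGx0 : ∀ u v : ℝ, DG (x, 0) (u, v) = u + κx * v := by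
    intro u v
    have : ((u, v) : ℝ × ℝ) = u • ((1, 0) : ℝ × ℝ) + v • ((0, 1) : ℝ × ℝ) := by
      simp [Prod.ext_iff]
    rw [this, map_add, ContinuousLinearMap.map_smul, ContinuousLinearMap.map_smul,
      hA1 x hx, hA2 x hx]
    simp [hκxdef, smul_eq_mul] <;> ring
  have hFe : HasFDerivAt F (e : ℝ × ℝ →L[ℝ] ℝ × ℝ) (x, 0) := by
    have he : (e : ℝ × ℝ →L[ℝ] ℝ × ℝ)
        = (DG (x, 0)).prod (ContinuousLinearMap.snd ℝ ℝ ℝ) := by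
      apply ContinuousLinearMap.ext
      rintro ⟨u, v⟩
      simp [hedef, hAdef, ContinuousLinearEquiv.equivOfInverse_apply,
        hDGx0 u v, Prod.ext_iff] <;> ring
    rw [he]
    exact hF_fderiv
  have hF_cd : ContDiffAt ℝ 2 F (x, 0) := by
    exact (hG_smooth.contDiffAt (hS_open.mem_nhds hxS)).prodMk contDiffAt_snd
  have hF_strict : HasStrictFDerivAt F (e : ℝ × ℝ →L[ℝ] ℝ × ℝ) (x, 0) :=
    hF_cd.hasStrictFDerivAt' hFe (by norm_num)
  set Φ : ℝ × ℝ → ℝ × ℝ := hF_strict.localInverse F e (x, 0) with hΦdef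
  have hFx0 : F (x, 0) = (x, 0) := by simp [hFdef, hG2def, hG_id x hx]
  have hΦ_strict : HasStrictFDerivAt Φ ((e.symm : ℝ × ℝ →L[ℝ] ℝ × ℝ)) ((x, 0) : ℝ × ℝ) := by
    have := hF_strict.to_localInverse
    rwa [hFx0] at this
  have hΦx0 : Φ (x, 0) = (x, 0) := by
    have := hF_strict.localInverse_apply_image
    rwa [hFx0] at this
  have hΦ_cont : ContinuousAt Φ (x, 0) := by
    have := hF_strict.localInverse_continuousAt
    rwa [hFx0] at this
  have hΦ_right : ∀ᶠ p in 𝓝 ((x, 0) : ℝ × ℝ), F (Φ p) = p := by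
    have := hF_strict.eventually_right_inverse
    rwa [hFx0] at this
  -- h δ = Ginv x δ has derivative -κx at 0
  set h : ℝ → ℝ := fun δ => Ginv x δ with hhdef
  have hline_cont : Tendsto (fun δ : ℝ => ((x, δ) : ℝ × ℝ)) (𝓝 0) (𝓝 ((x, 0) : ℝ × ℝ)) := by
    have : Continuous (fun δ : ℝ => ((x, δ) : ℝ × ℝ)) := by fun_prop
    simpa using this.tendsto 0
  set ψ : ℝ → ℝ := fun δ => (Φ (x, δ)).1 with hψdef
  have hψ_deriv : HasDerivAt ψ (-κx) 0 := by
    have h1 : HasDerivAt (fun δ : ℝ => Φ (x, δ)) ((e.symm : ℝ × ℝ →L[ℝ] ℝ × ℝ) (0, 1)) 0 :=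
      hΦ_strict.hasFDerivAt.comp_hasDerivAt 0 (hline2 x 0)
    have h2 : HasDerivAt ψ (((e.symm : ℝ × ℝ →L[ℝ] ℝ × ℝ) (0, 1)).1) 0 := by
      have := (ContinuousLinearMap.fst ℝ ℝ ℝ).hasFDerivAt.comp_hasDerivAt 0 h1
      exact this
    have h3 : ((e.symm : ℝ × ℝ →L[ℝ] ℝ × ℝ) ((0 : ℝ), (1 : ℝ))).1 = -κx := by
      simp [hedef, hA'def, ContinuousLinearEquiv.symm_equivOfInverse,
        ContinuousLinearEquiv.equivOfInverse_apply]
    rwa [h3] at h2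
  have hψΦ : ∀ᶠ δ in 𝓝 (0 : ℝ), h δ = ψ δ := by
    have hev1 : ∀ᶠ δ in 𝓝 (0 : ℝ), F (Φ (x, δ)) = (x, δ) := hline_cont.eventually hΦ_right
    have hev2 : ∀ᶠ δ in 𝓝 (0 : ℝ), Φ (x, δ) ∈ S := by
      have hlc : ContinuousAt (fun δ : ℝ => ((x, δ) : ℝ × ℝ)) 0 :=
        (Continuous.continuousAt (by fun_prop))
      have hcont : ContinuousAt (fun δ : ℝ => Φ (x, δ)) 0 := by
        refine ContinuousAt.comp ?_ hlc
        exact hΦ_cont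
      have : (fun δ : ℝ => Φ (x, δ)) 0 ∈ S := by simpa [hΦx0] using hxS
      exact hcont.eventually_mem (hS_open.mem_nhds this)
    have hev3 : ∀ᶠ δ in 𝓝 (0 : ℝ), δ ∈ Ioo (-ε) ε := isOpen_Ioo.mem_nhds h0ε
    filter_upwards [hev1, hev2, hev3] with δ h1 h2 h3
    have hp2 : (Φ (x, δ)).2 = δ := congrArg Prod.snd h1
    have hp1 : G ((Φ (x, δ)).1) δ = x := by
      have := congrArg Prod.fst h1
      simpa [hFdef, hG2def, hp2] using this
    have hG2eq : G (Ginv x δ) δ = G ((Φ (x, δ)).1) δ := by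
      rw [hp1, hGinv δ h3 x hx]
    exact (hG_mono δ h3).injOn (hGinv_mem δ h3 x hx) h2.1 hG2eq
  have hh_deriv : HasDerivAt h (-κx) 0 := hψ_deriv.congr_of_eventuallyEq hψΦ
  have hh0 : h 0 = x := hA3 x hx
  -- Gx = first partial of G, and its derivative along δ ↦ (h δ, δ)
  set Gx : ℝ × ℝ → ℝ := fun p => DG p ((1, 0) : ℝ × ℝ) with hGxdef
  set L : (ℝ × ℝ →L[ℝ] ℝ) →L[ℝ] ℝ := ContinuousLinearMap.apply ℝ ℝ ((1, 0) : ℝ × ℝ)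
    with hLdef
  set L2 : (ℝ × ℝ →L[ℝ] ℝ) →L[ℝ] ℝ := ContinuousLinearMap.apply ℝ ℝ ((0, 1) : ℝ × ℝ)
    with hL2def
  have hGx_fderiv : HasFDerivAt Gx (L.comp B) (x, 0) :=
    L.hasFDerivAt.comp (x, 0) hDG_diffAt.hasFDerivAt
  -- A8 : B (1,0) (1,0) = 0
  have hA8 : B ((1, 0) : ℝ × ℝ) ((1, 0) : ℝ × ℝ) = 0 := by
    have h1 : HasDerivAt (fun y : ℝ => Gx (y, 0)) ((L.comp B) ((1, 0) : ℝ × ℝ)) x :=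
      by have := hGx_fderiv.comp_hasDerivAt x (hline1 0 x); exact this
    have h2 : HasDerivAt (fun _ : ℝ => (1 : ℝ)) ((L.comp B) ((1, 0) : ℝ × ℝ)) x := by
      refine h1.congr_of_eventuallyEq ?_
      filter_upwards [hXs_open.mem_nhds hx] with z hz
      exact (hA1 z hz).symm
    have h3 := h2.unique (hasDerivAt_const x (1 : ℝ))
    simpa [hLdef] using h3
  -- A9 : κ has derivative c := B (1,0)(0,1) at x
  set c : ℝ := B ((1, 0) : ℝ × ℝ) ((0, 1) : ℝ × ℝ) with hcdef
  have hκ_deriv : HasDerivAt κ c x := by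
    have hGd_fderiv : HasFDerivAt (fun p => DG p ((0, 1) : ℝ × ℝ)) (L2.comp B) (x, 0) :=
      L2.hasFDerivAt.comp (x, 0) hDG_diffAt.hasFDerivAt
    have h1 : HasDerivAt (fun y : ℝ => DG (y, 0) ((0, 1) : ℝ × ℝ))
        ((L2.comp B) ((1, 0) : ℝ × ℝ)) x :=
      by have := hGd_fderiv.comp_hasDerivAt x (hline1 0 x); exact this
    have h2 : HasDerivAt κ ((L2.comp B) ((1, 0) : ℝ × ℝ)) x := by
      refine h1.congr_of_eventuallyEq ?_
      filter_upwards [hXs_open.mem_nhds hx] with z hz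
      exact (hA2 z hz).symm
    simpa [hL2def, hcdef] using h2
  -- A10 : symmetry of second derivative
  have hsymm : B ((0, 1) : ℝ × ℝ) ((1, 0) : ℝ × ℝ) = c := by
    have hs : IsSymmSndFDerivAt ℝ G2 (x, 0) :=
      (hG_smooth.contDiffAt (hS_open.mem_nhds hxS)).isSymmSndFDerivAt (by simp)
    exact hs ((0, 1) : ℝ × ℝ) ((1, 0) : ℝ × ℝ)
  -- q δ = Gx (h δ, δ), derivative c at 0
  set q : ℝ → ℝ := fun δ => Gx (h δ, δ) with hqdef
  have hq_deriv : HasDerivAt q c 0 := by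
    have hcurve : HasDerivAt (fun δ : ℝ => ((h δ, δ) : ℝ × ℝ)) ((-κx, 1) : ℝ × ℝ) 0 :=
      hh_deriv.prodMk (hasDerivAt_id 0)
    have h1' := HasFDerivAt.comp_hasDerivAt_of_eq 0 hGx_fderiv hcurve
      (by show ((x, 0) : ℝ × ℝ) = (h 0, 0); rw [hh0])
    have h1 : HasDerivAt q ((L.comp B) ((-κx, 1) : ℝ × ℝ)) 0 := by
      refine h1'.congr_of_eventuallyEq (Eventually.of_forall fun δ => ?_)
      rfl
    have key : ∀ v : ℝ × ℝ, (L.comp B) v = B v ((1, 0) : ℝ × ℝ) := by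
      intro v
      rw [ContinuousLinearMap.comp_apply, hLdef, ContinuousLinearMap.apply_apply]
    have h2 : (L.comp B) ((-κx, 1) : ℝ × ℝ) = c := by
      have hsplit : ((-κx, 1) : ℝ × ℝ) = (-κx) • ((1, 0) : ℝ × ℝ) + ((0, 1) : ℝ × ℝ) := by
        simp [Prod.ext_iff]
      rw [key, hsplit, B.map_add, B.map_smul, ContinuousLinearMap.add_apply,
        ContinuousLinearMap.smul_apply, hA8, hsymm, smul_zero, zero_add]
    rwa [h2] at h1
  have hq0 : q 0 = 1 := by
    simp only [hqdef, hGxdef, hh0]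
    exact hA1 x hx
  -- f-part
  have hfx_diff : DifferentiableAt ℝ (fun y => f y w) x :=
    ((hf_smooth w hw).differentiableOn one_ne_zero).differentiableAt (hXs_open.mem_nhds hx)
  set fx : ℝ := deriv (fun y => f y w) x with hfxdef
  have hfx : HasDerivAt (fun y => f y w) fx x := hfx_diff.hasDerivAt
  -- the candidate derivative
  refine ⟨c * f x w + κx * fx, hκ_deriv.mul hfx, ?_⟩
  -- g δ = f(h δ) w * (q δ)⁻¹
  set g : ℝ → ℝ := fun δ => f (h δ) w * (q δ)⁻¹ with hgdef
  have hfh : HasDerivAt (fun δ => f (h δ) w) (fx * (-κx)) 0 := by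
    have hfx' : HasDerivAt (fun y => f y w) fx (h 0) := by rwa [hh0]
    exact hfx'.comp 0 hh_deriv
  have hq_ne : q 0 ≠ 0 := by rw [hq0]; norm_num
  have hqinv : HasDerivAt (fun δ => (q δ)⁻¹) (-c / q 0 ^ 2) 0 := hq_deriv.inv hq_ne
  have hg_deriv : HasDerivAt g (-(c * f x w + κx * fx)) 0 := by
    have h1 : HasDerivAt g (fx * (-κx) * (q 0)⁻¹ + f (h 0) w * (-c / q 0 ^ 2)) 0 :=
      hfh.mul hqinv
    have h2 : fx * (-κx) * (q 0)⁻¹ + f (h 0) w * (-c / q 0 ^ 2)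
        = -(c * f x w + κx * fx) := by
      rw [hq0, hh0]; ring
    rwa [h2] at h1
  have hslope : Tendsto (slope g 0) (𝓝[≠] (0:ℝ)) (𝓝 (-(c * f x w + κx * fx))) :=
    hasDerivAt_iff_tendsto_slope.mp hg_deriv
  have hg0 : g 0 = f x w := by rw [hgdef]; simp [hq0, hh0]
  refine hslope.congr' ?_
  have hev3 : ∀ᶠ δ in 𝓝[≠] (0 : ℝ), δ ∈ Ioo (-ε) ε :=
    eventually_nhdsWithin_of_eventually_nhds (isOpen_Ioo.mem_nhds h0ε)
  filter_upwards [hev3] with δ hδ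
  have hJδ : J x δ = (q δ)⁻¹ := by
    rw [hA5 δ hδ]
  rw [slope_def_field, hg0]
  simp only [hgdef, hJδ, hhdef]
  ring_nf
end

section
/- Consider the linear model Y = λ + Xγ + U with X and U independent, and suppose X − E[X] is symmetrically distributed about zero. Then the scale effect computed at μ = E[X], Π_{τ,S}(X,γ) := ṡ(0)·γ·E[f_U(Q_τ[Y]−λ−γX)·(X−E[X])]/f_Y(Q_τ[Y]), depends on neither E[X] nor the sign of γ: for every c∈ℝ, Π_{τ,S}(X+c,γ) = Π_{τ,S}(X,γ) (where the quantities for X+c are computed with outcome Y=λ+γ(X+c)+U, quantile Q_τ of that outcome, and centering at E[X]+c), and Π_{τ,S}(X,−γ) = Π_{τ,S}(X,γ). (Proposition, Section 2.3.) -/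
open MeasureTheory ProbabilityTheory Filter Set Topology ENNReal

/-- The τ-quantile `Q_τ[Z] = inf {q : P(Z ≤ q) ≥ τ}` of a real random variable `Z`. -/
noncomputable def rvQuantile {Ω : Type*} [MeasurableSpace Ω] (μ : Measure Ω)
    (τ : ℝ) (Z : Ω → ℝ) : ℝ :=
  sInf {q : ℝ | τ ≤ (μ {ω | Z ω ≤ q}).toReal}

/-- Uniqueness of continuous densities wrt Lebesgue. -/
lemma cont_density_unique {f g : ℝ → ℝ} (hf0 : ∀ x, 0 ≤ f x) (hg0 : ∀ x, 0 ≤ g x)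
    (hf : Continuous f) (hg : Continuous g)
    (h : volume.withDensity (fun x => ENNReal.ofReal (f x)) =
         volume.withDensity (fun x => ENNReal.ofReal (g x))) : f = g := by
  have hae : (fun x => ENNReal.ofReal (f x)) =ᵐ[volume] fun x => ENNReal.ofReal (g x) :=
    (withDensity_eq_iff_of_sigmaFinite
      (ENNReal.measurable_ofReal.comp hf.measurable).aemeasurable
      (ENNReal.measurable_ofReal.comp hg.measurable).aemeasurable).mp h
  have hae' : f =ᵐ[volume] g := by
    filter_upwards [hae] with x hx
    have := congrArg ENNReal.toReal hx
    rwa [ENNReal.toReal_ofReal (hf0 x), ENNReal.toReal_ofReal (hg0 x)] at this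
  exact (hf.ae_eq_iff_eq volume hg).mp hae'

/-- Translating a measure with density. -/
lemma map_add_withDensity (f : ℝ → ℝ≥0∞) (hf : Measurable f) (c : ℝ) :
    Measure.map (fun y => y + c) (volume.withDensity f) =
      volume.withDensity (fun y => f (y - c)) := by
  ext s hs
  rw [Measure.map_apply (measurable_add_const c) hs,
    withDensity_apply _ (hs.preimage (measurable_add_const c)), withDensity_apply _ hs]
  have hvol : Measure.map (fun x : ℝ => x + c) volume = volume := map_add_right_eq_self volume c
  calc ∫⁻ x in (fun y => y + c) ⁻¹' s, f x ∂volume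
      = ∫⁻ x in (fun y => y + c) ⁻¹' s, f ((x + c) - c) ∂volume := by
        simp
    _ = ∫⁻ y in s, f (y - c) ∂(Measure.map (fun x : ℝ => x + c) volume) :=
        (setLIntegral_map hs (hf.comp (measurable_sub_const c)) (measurable_add_const c)).symm
    _ = ∫⁻ y in s, f (y - c) ∂volume := by rw [hvol]

lemma rvQuantile_congr_law {Ω : Type*} [MeasurableSpace Ω] {μ : Measure Ω}
    {W₁ W₂ : Ω → ℝ} (h1 : Measurable W₁) (h2 : Measurable W₂)
    (h : μ.map W₁ = μ.map W₂) (τ : ℝ) :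
    rvQuantile μ τ W₁ = rvQuantile μ τ W₂ := by
  unfold rvQuantile
  congr 1
  ext q
  have e1 : μ {ω | W₁ ω ≤ q} = μ.map W₁ (Iic q) :=
    (Measure.map_apply h1 measurableSet_Iic).symm
  have e2 : μ {ω | W₂ ω ≤ q} = μ.map W₂ (Iic q) :=
    (Measure.map_apply h2 measurableSet_Iic).symm
  simp only [mem_setOf_eq, e1, e2, h]

lemma quantileSet_nonempty_bddBelow {Ω : Type*} [MeasurableSpace Ω] (μ : Measure Ω)
    [IsProbabilityMeasure μ] {Z : Ω → ℝ} (hZ : Measurable Z) {τ : ℝ}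
    (hτ0 : 0 < τ) (hτ1 : τ < 1) :
    ({q : ℝ | τ ≤ (μ {ω | Z ω ≤ q}).toReal}).Nonempty ∧
      BddBelow {q : ℝ | τ ≤ (μ {ω | Z ω ≤ q}).toReal} := by
  set ν := μ.map Z with hν
  have : IsProbabilityMeasure ν := Measure.isProbabilityMeasure_map hZ.aemeasurable
  have key : ∀ q : ℝ, μ {ω | Z ω ≤ q} = ν (Iic q) := fun q =>
    (Measure.map_apply hZ measurableSet_Iic).symm
  constructor
  · -- nonempty
    have htop : Tendsto (fun q : ℝ => ν (Iic q)) atTop (𝓝 1) := by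
      simpa using tendsto_measure_Iic_atTop ν
    have htop' : Tendsto (fun q : ℝ => (ν (Iic q)).toReal) atTop (𝓝 1) := by
      have := (ENNReal.tendsto_toReal (by norm_num : (1:ℝ≥0∞) ≠ ⊤)).comp htop
      simpa [Function.comp_def] using this
    have hev : ∀ᶠ q in atTop, τ ≤ (ν (Iic q)).toReal :=
      htop'.eventually_const_le hτ1
    obtain ⟨q, hq⟩ := hev.exists
    exact ⟨q, by simpa [key q] using hq⟩
  · -- bdd below
    have hbot : Tendsto (fun q : ℝ => ν (Iic q)) atBot (𝓝 0) := by
      have hi : (⋂ q : ℝ, Iic q) = (∅ : Set ℝ) := by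
        ext x; simp only [mem_iInter, mem_Iic, mem_empty_iff_false, iff_false, not_forall]
        exact ⟨x - 1, by push_neg; linarith⟩
      have := tendsto_measure_iInter_atBot (μ := ν)
        (fun q : ℝ => measurableSet_Iic.nullMeasurableSet) (fun a b hab => Iic_subset_Iic.2 hab)
        ⟨0, measure_ne_top ν _⟩
      rw [hi] at this
      simpa [Function.comp_def] using this
    have hbot' : Tendsto (fun q : ℝ => (ν (Iic q)).toReal) atBot (𝓝 0) := by
      have := (ENNReal.tendsto_toReal (by norm_num : (0:ℝ≥0∞) ≠ ⊤)).comp hbot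
      simpa [Function.comp_def] using this
    have hev : ∀ᶠ q in atBot, (ν (Iic q)).toReal < τ := hbot'.eventually_lt_const hτ0
    obtain ⟨q0, hq0⟩ := hev.exists
    refine ⟨q0, fun q hq => ?_⟩
    by_contra hlt
    push_neg at hlt
    have hmono : ν (Iic q) ≤ ν (Iic q0) := measure_mono (Iic_subset_Iic.2 hlt.le)
    have : (ν (Iic q)).toReal ≤ (ν (Iic q0)).toReal :=
      ENNReal.toReal_mono (measure_ne_top ν _) hmono
    rw [mem_setOf_eq, key q] at hq
    linarith

lemma rvQuantile_add_const {Ω : Type*} [MeasurableSpace Ω] (μ : Measure Ω)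
    [IsProbabilityMeasure μ] {Z : Ω → ℝ} (hZ : Measurable Z) {τ : ℝ}
    (hτ0 : 0 < τ) (hτ1 : τ < 1) (c : ℝ) :
    rvQuantile μ τ (fun ω => Z ω + c) = rvQuantile μ τ Z + c := by
  obtain ⟨hne, hbdd⟩ := quantileSet_nonempty_bddBelow μ hZ hτ0 hτ1
  set S := {q : ℝ | τ ≤ (μ {ω | Z ω ≤ q}).toReal} with hS
  have hset : {q : ℝ | τ ≤ (μ {ω | Z ω + c ≤ q}).toReal} = (fun x => x + c) '' S := by
    ext q
    have : {ω | Z ω + c ≤ q} = {ω | Z ω ≤ q - c} := by ext ω; simp [le_sub_iff_add_le]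
    simp only [mem_setOf_eq, this, mem_image]
    constructor
    · intro h; exact ⟨q - c, h, by ring⟩
    · rintro ⟨x, hx, rfl⟩; simpa [hS] using hx
  have hglb : IsGLB S (sInf S) := isGLB_csInf hne hbdd
  have hglb' : IsGLB ((fun x => x + c) '' S) (sInf S + c) := by
    constructor
    · rintro _ ⟨x, hx, rfl⟩
      have := hglb.1 hx
      dsimp only
      linarith
    · intro b hb
      have : b - c ∈ lowerBounds S := by
        intro x hx
        have h2 := hb ⟨x, hx, rfl⟩
        dsimp only at h2
        linarith
      have := hglb.2 this
      linarith
  have : rvQuantile μ τ (fun ω => Z ω + c) = sInf ((fun x => x + c) '' S) := by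
    unfold rvQuantile; rw [hset]
  rw [this, hglb'.csInf_eq (hne.image _)]
  rfl
/-- **Proposition (Section 2.3)**: in the linear model `Y = λ + Xγ + U` with `X ⟂ U` and
`X − E[X]` symmetric about zero, the scale effect computed at `μ = E[X]`,
`Π_{τ,S}(X,γ) = ṡ(0)·γ·E[f_U(Q_τ[Y]−λ−γX)(X−E[X])]/f_Y(Q_τ[Y])`,
depends neither on `E[X]` (is invariant to replacing `X` by `X+c`, with all objects
recomputed for the shifted covariate) nor on the sign of `γ`. -/
theorem stmt_7
    {Ω : Type*} [MeasurableSpace Ω] (μ : Measure Ω) [IsProbabilityMeasure μ]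
    (X U : Ω → ℝ) (hX_meas : Measurable X) (hU_meas : Measurable U)
    (hX_int : Integrable X μ)
    (hindep : IndepFun X U μ)
    -- U has a continuous bounded density f_U
    (fU : ℝ → ℝ) (hfU_nonneg : ∀ x, 0 ≤ fU x) (hfU_cont : Continuous fU)
    (hfU_bdd : ∃ C, ∀ x, fU x ≤ C)
    (hfU_density :
      Measure.map U μ = volume.withDensity (fun x => ENNReal.ofReal (fU x)))
    -- X − E[X] is symmetrically distributed about zero
    (hX_symm :
      Measure.map (fun ω => X ω - ∫ ω', X ω' ∂μ) μ =
        Measure.map (fun ω => -(X ω - ∫ ω', X ω' ∂μ)) μ)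
    (lam γ s0 : ℝ) (hγ : γ ≠ 0)
    (τ : ℝ) (hτ : τ ∈ Ioo (0:ℝ) 1)
    -- continuous densities of the outcomes Y = λ+γX+U, Y_c = λ+γ(X+c)+U, Y₋ = λ−γX+U
    (fY : ℝ → ℝ) (hfY_nonneg : ∀ y, 0 ≤ fY y) (hfY_cont : Continuous fY)
    (hfY_density :
      Measure.map (fun ω => lam + γ * X ω + U ω) μ =
        volume.withDensity (fun y => ENNReal.ofReal (fY y)))
    (fYc : ℝ → ℝ → ℝ) (hfYc_nonneg : ∀ c y, 0 ≤ fYc c y)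
    (hfYc_cont : ∀ c, Continuous (fYc c))
    (hfYc_density : ∀ c : ℝ,
      Measure.map (fun ω => lam + γ * (X ω + c) + U ω) μ =
        volume.withDensity (fun y => ENNReal.ofReal (fYc c y)))
    (fYneg : ℝ → ℝ) (hfYneg_nonneg : ∀ y, 0 ≤ fYneg y) (hfYneg_cont : Continuous fYneg)
    (hfYneg_density :
      Measure.map (fun ω => lam + -γ * X ω + U ω) μ =
        volume.withDensity (fun y => ENNReal.ofReal (fYneg y)))
    -- positivity of the densities at the respective quantiles
    (hfY_pos : 0 < fY (rvQuantile μ τ (fun ω => lam + γ * X ω + U ω)))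
    (hfYc_pos : ∀ c : ℝ,
      0 < fYc c (rvQuantile μ τ (fun ω => lam + γ * (X ω + c) + U ω)))
    (hfYneg_pos : 0 < fYneg (rvQuantile μ τ (fun ω => lam + -γ * X ω + U ω))) :
    -- invariance to a location change of the covariate
    (∀ c : ℝ,
      s0 * γ *
          (∫ ω, fU (rvQuantile μ τ (fun ω' => lam + γ * (X ω' + c) + U ω') -
              lam - γ * (X ω + c)) * ((X ω + c) - ∫ ω', (X ω' + c) ∂μ) ∂μ) /
          fYc c (rvQuantile μ τ (fun ω' => lam + γ * (X ω' + c) + U ω')) =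
        s0 * γ *
          (∫ ω, fU (rvQuantile μ τ (fun ω' => lam + γ * X ω' + U ω') -
              lam - γ * X ω) * (X ω - ∫ ω', X ω' ∂μ) ∂μ) /
          fY (rvQuantile μ τ (fun ω' => lam + γ * X ω' + U ω'))) ∧
    -- invariance to the sign of γ
    (s0 * -γ *
        (∫ ω, fU (rvQuantile μ τ (fun ω' => lam + -γ * X ω' + U ω') -
            lam - -γ * X ω) * (X ω - ∫ ω', X ω' ∂μ) ∂μ) /
        fYneg (rvQuantile μ τ (fun ω' => lam + -γ * X ω' + U ω')) =
      s0 * γ *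
        (∫ ω, fU (rvQuantile μ τ (fun ω' => lam + γ * X ω' + U ω') -
            lam - γ * X ω) * (X ω - ∫ ω', X ω' ∂μ) ∂μ) /
        fY (rvQuantile μ τ (fun ω' => lam + γ * X ω' + U ω'))) := by
  obtain ⟨hτ0, hτ1⟩ := hτ
  set m := ∫ ω', X ω' ∂μ with hm
  have hY_meas : Measurable (fun ω => lam + γ * X ω + U ω) :=
    (measurable_const.add (hX_meas.const_mul γ)).add hU_meas
  set Q := rvQuantile μ τ (fun ω' => lam + γ * X ω' + U ω') with hQ
  constructor
  · -- location invariance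
    intro c
    have hfun : (fun ω' => lam + γ * (X ω' + c) + U ω')
        = fun ω' => (lam + γ * X ω' + U ω') + γ * c := by funext ω'; ring
    have hQc : rvQuantile μ τ (fun ω' => lam + γ * (X ω' + c) + U ω') = Q + γ * c := by
      rw [hfun]; exact rvQuantile_add_const μ hY_meas hτ0 hτ1 (γ * c)
    have hmapc : Measure.map (fun ω => lam + γ * (X ω + c) + U ω) μ =
        volume.withDensity (fun y => ENNReal.ofReal (fY (y - γ * c))) := by
      rw [hfun]
      have hcomp : (fun ω => (lam + γ * X ω + U ω) + γ * c)
          = (fun y => y + γ * c) ∘ (fun ω => lam + γ * X ω + U ω) := rfl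
      have hfYm : Measurable fun y => ENNReal.ofReal (fY y) :=
        ENNReal.measurable_ofReal.comp hfY_cont.measurable
      rw [hcomp, ← Measure.map_map (measurable_add_const (γ * c)) hY_meas, hfY_density,
        map_add_withDensity _ hfYm (γ * c)]
    have hfYc_eq : fYc c = fun y => fY (y - γ * c) :=
      cont_density_unique (hfYc_nonneg c) (fun y => hfY_nonneg _) (hfYc_cont c)
        (hfY_cont.comp (continuous_id.sub continuous_const))
        ((hfYc_density c).symm.trans hmapc)
    have hfYc_val : fYc c (Q + γ * c) = fY Q := by
      rw [hfYc_eq]; congr 1; ring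
    have hintc : (∫ ω', (X ω' + c) ∂μ) = m + c := by
      rw [integral_add hX_int (integrable_const c), integral_const]; simp [hm]
    rw [hQc, hfYc_val, hintc]
    have hIc : (∫ ω, fU (Q + γ * c - lam - γ * (X ω + c)) * ((X ω + c) - (m + c)) ∂μ)
        = ∫ ω, fU (Q - lam - γ * X ω) * (X ω - m) ∂μ := by
      refine integral_congr_ae (Eventually.of_forall fun ω => ?_)
      dsimp only
      have h1 : Q + γ * c - lam - γ * (X ω + c) = Q - lam - γ * X ω := by ring
      have h2 : X ω + c - (m + c) = X ω - m := by ring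
      rw [h1, h2]
    rw [hIc]
  · -- sign invariance
    have hZmeas : Measurable (fun ω => X ω - m) := hX_meas.sub_const m
    have hZneg : Measurable (fun ω => -(X ω - m)) := hZmeas.neg
    have hindZU : IndepFun (fun ω => X ω - m) U μ :=
      hindep.comp (measurable_id.sub_const m) measurable_id
    have hindZU' : IndepFun (fun ω => -(X ω - m)) U μ :=
      hindep.comp ((measurable_id.sub_const m).neg) measurable_id
    have h1 : μ.map (fun ω => ((X ω - m), U ω))
        = (μ.map (fun ω => X ω - m)).prod (μ.map U) :=
      (indepFun_iff_map_prod_eq_prod_map_map hZmeas.aemeasurable hU_meas.aemeasurable).mp hindZU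
    have h2 : μ.map (fun ω => (-(X ω - m), U ω))
        = (μ.map (fun ω => -(X ω - m))).prod (μ.map U) :=
      (indepFun_iff_map_prod_eq_prod_map_map hZneg.aemeasurable hU_meas.aemeasurable).mp hindZU'
    have hjoint : μ.map (fun ω => ((X ω - m), U ω)) = μ.map (fun ω => (-(X ω - m), U ω)) := by
      rw [h1, h2, hX_symm]
    set g : ℝ × ℝ → ℝ := fun p => (lam - γ * m - γ * p.1) + p.2 with hgdef
    have hg : Measurable g :=
      ((measurable_const.sub (measurable_fst.const_mul γ)).add measurable_snd)
    have hYneg_meas : Measurable (fun ω => lam + -γ * X ω + U ω) :=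
      (measurable_const.add (hX_meas.const_mul (-γ))).add hU_meas
    have hmapneg : μ.map (fun ω => lam + -γ * X ω + U ω)
        = μ.map (fun ω => (lam + γ * X ω + U ω) + -(2 * γ * m)) := by
      have e1 : (fun ω => lam + -γ * X ω + U ω) = g ∘ (fun ω => ((X ω - m), U ω)) := by
        funext ω; simp only [Function.comp_apply, hgdef]; ring
      have e2 : (fun ω => (lam + γ * X ω + U ω) + -(2 * γ * m))
          = g ∘ (fun ω => (-(X ω - m), U ω)) := by
        funext ω; simp only [Function.comp_apply, hgdef]; ring
      rw [e1, e2, ← Measure.map_map hg (hZmeas.prodMk hU_meas),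
        ← Measure.map_map hg (hZneg.prodMk hU_meas), hjoint]
    have hQneg : rvQuantile μ τ (fun ω' => lam + -γ * X ω' + U ω') = Q + -(2 * γ * m) :=
      (rvQuantile_congr_law hYneg_meas (hY_meas.add_const _) hmapneg τ).trans
        (rvQuantile_add_const μ hY_meas hτ0 hτ1 _)
    have hmapneg2 : μ.map (fun ω => lam + -γ * X ω + U ω)
        = volume.withDensity (fun y => ENNReal.ofReal (fY (y - -(2 * γ * m)))) := by
      rw [hmapneg]
      have hcomp : (fun ω => (lam + γ * X ω + U ω) + -(2 * γ * m))
          = (fun y => y + -(2 * γ * m)) ∘ (fun ω => lam + γ * X ω + U ω) := rfl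
      have hfYm : Measurable fun y => ENNReal.ofReal (fY y) :=
        ENNReal.measurable_ofReal.comp hfY_cont.measurable
      rw [hcomp, ← Measure.map_map (measurable_add_const _) hY_meas, hfY_density,
        map_add_withDensity _ hfYm]
    have hfYneg_eq : fYneg = fun y => fY (y - -(2 * γ * m)) :=
      cont_density_unique hfYneg_nonneg (fun y => hfY_nonneg _) hfYneg_cont
        (hfY_cont.comp (continuous_id.sub continuous_const))
        (hfYneg_density.symm.trans hmapneg2)
    have hfYneg_val : fYneg (Q + -(2 * γ * m)) = fY Q := by
      rw [hfYneg_eq]; congr 1; ring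
    have hcont : Continuous (fun z : ℝ => fU ((Q - lam - γ * m) + γ * z) * z) :=
      (hfU_cont.comp (continuous_const.add (continuous_const.mul continuous_id))).mul
        continuous_id
    have hInt : (∫ ω, fU (Q + -(2 * γ * m) - lam - -γ * X ω) * (X ω - m) ∂μ)
        = -∫ ω, fU (Q - lam - γ * X ω) * (X ω - m) ∂μ := by
      calc (∫ ω, fU (Q + -(2 * γ * m) - lam - -γ * X ω) * (X ω - m) ∂μ)
          = ∫ ω, fU ((Q - lam - γ * m) + γ * (X ω - m)) * (X ω - m) ∂μ := by
            refine integral_congr_ae (Eventually.of_forall fun ω => ?_)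
            dsimp only
            have h3 : Q + -(2 * γ * m) - lam - -γ * X ω
                = (Q - lam - γ * m) + γ * (X ω - m) := by ring
            rw [h3]
        _ = ∫ z, fU ((Q - lam - γ * m) + γ * z) * z ∂(μ.map (fun ω => X ω - m)) :=
            (integral_map hZmeas.aemeasurable hcont.aestronglyMeasurable).symm
        _ = ∫ z, fU ((Q - lam - γ * m) + γ * z) * z ∂(μ.map (fun ω => -(X ω - m))) := by
            rw [hX_symm]
        _ = ∫ ω, fU ((Q - lam - γ * m) + γ * (-(X ω - m))) * (-(X ω - m)) ∂μ :=
            integral_map hZneg.aemeasurable hcont.aestronglyMeasurable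
        _ = ∫ ω, -(fU (Q - lam - γ * X ω) * (X ω - m)) ∂μ := by
            refine integral_congr_ae (Eventually.of_forall fun ω => ?_)
            dsimp only
            have h4 : Q - lam - γ * m + γ * -(X ω - m) = Q - lam - γ * X ω := by ring
            rw [h4]; ring
        _ = -∫ ω, fU (Q - lam - γ * X ω) * (X ω - m) ∂μ := integral_neg _
    rw [hQneg, hfYneg_val, hInt]
    ring
end
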